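/- Fictitious space / stable decomposition lemma (lower bound): let A and M⁻¹ = Σⱼ Rⱼᵀ Aⱼ⁻¹ Rⱼ be as in additive Schwarz with Aⱼ = Rⱼ A Rⱼᵀ. Suppose every u ∈ ℝⁿ admits a decomposition u = Σⱼ Rⱼᵀ uⱼ with Σⱼ uⱼᵀ Aⱼ uⱼ ≤ C₀ uᵀ A u. Then λ_min(M⁻¹A) ≥ 1/C₀, i.e., uᵀ A u ≤ C₀ · uᵀ A M⁻¹ A u for all u. -/

import Mathlib

open Matrix

/-- Stable decomposition lemma (lower bound for additive Schwarz): if every `u`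
admits a decomposition `u = Σⱼ Rⱼᵀ uⱼ` with `Σⱼ uⱼᵀ Aⱼ uⱼ ≤ C₀ uᵀ A u`
(`Aⱼ = Rⱼ A Rⱼᵀ`), then `λ_min(M⁻¹A) ≥ 1/C₀`, i.e.
`uᵀ A u ≤ C₀ · uᵀ A M⁻¹ A u` for all `u`, where `M⁻¹ = Σⱼ Rⱼᵀ Aⱼ⁻¹ Rⱼ`. -/
theorem stmt13 {n N : ℕ} (A : Matrix (Fin n) (Fin n) ℝ) (hA : A.PosDef)
    (nj : Fin N → ℕ) (R : ∀ j, Matrix (Fin (nj j)) (Fin n) ℝ)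
    (hR : ∀ j, (R j).rank = nj j)
    (Minv : Matrix (Fin n) (Fin n) ℝ)
    (hM : Minv = ∑ j, (R j)ᵀ * (R j * A * (R j)ᵀ)⁻¹ * R j)
    (hMpd : Minv.PosDef)
    (C₀ : ℝ) (hC₀ : 0 < C₀)
    (hdecomp : ∀ u : Fin n → ℝ, ∃ uloc : ∀ j, Fin (nj j) → ℝ,
      u = ∑ j, (R j)ᵀ *ᵥ uloc j ∧
      ∑ j, uloc j ⬝ᵥ ((R j * A * (R j)ᵀ) *ᵥ uloc j) ≤ C₀ * (u ⬝ᵥ (A *ᵥ u))) :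
    ∀ u : Fin n → ℝ, u ⬝ᵥ (A *ᵥ u) ≤ C₀ * (u ⬝ᵥ ((A * Minv * A) *ᵥ u)) := by
  -- auxiliary: sums distribute over dot products and matrix-vector products
  have sum_dp : ∀ {m : ℕ} (f : Fin N → Fin m → ℝ) (x : Fin m → ℝ),
      (∑ j, f j) ⬝ᵥ x = ∑ j, f j ⬝ᵥ x := by
    intro m f x
    simp only [dotProduct, Finset.sum_apply, Finset.sum_mul]
    exact Finset.sum_comm
  have dp_sum : ∀ {m : ℕ} (x : Fin m → ℝ) (f : Fin N → Fin m → ℝ),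
      x ⬝ᵥ (∑ j, f j) = ∑ j, x ⬝ᵥ f j := by
    intro m x f
    simp only [dotProduct, Finset.sum_apply, Finset.mul_sum]
    exact Finset.sum_comm
  have sum_mv : ∀ (f : Fin N → Matrix (Fin n) (Fin n) ℝ) (x : Fin n → ℝ),
      (∑ j, f j) *ᵥ x = ∑ j, f j *ᵥ x := by
    intro f x
    funext i
    simp only [Matrix.mulVec, dotProduct, Finset.sum_apply, Matrix.sum_apply, Finset.sum_mul]
    exact Finset.sum_comm
  -- symmetry of A as a transpose identity
  have hAt : Aᵀ = A := by
    rw [← Matrix.conjTranspose_eq_transpose_of_trivial]; exact hA.isHermitian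
  -- each local matrix Aⱼ = Rⱼ A Rⱼᵀ is positive definite
  have hAj : ∀ j, (R j * A * (R j)ᵀ).PosDef := by
    intro j
    have hinj : Function.Injective ((R j)ᵀ).mulVec := by
      have hr : ((R j)ᵀ).rank = nj j := by rw [Matrix.rank_transpose]; exact hR j
      have hrk := LinearMap.finrank_range_add_finrank_ker ((R j)ᵀ).mulVecLin
      rw [Module.finrank_fin_fun] at hrk
      rw [Matrix.rank] at hr
      have hker : Module.finrank ℝ (LinearMap.ker ((R j)ᵀ).mulVecLin) = 0 := by omega
      have hker' : LinearMap.ker ((R j)ᵀ).mulVecLin = ⊥ :=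
        Submodule.finrank_eq_zero.mp hker
      have := LinearMap.ker_eq_bot.mp hker'
      intro x y hxy
      exact this (by simpa only [Matrix.mulVecLin_apply] using hxy)
    rw [Matrix.posDef_iff_dotProduct_mulVec]
    constructor
    · show _ = _
      rw [Matrix.conjTranspose_eq_transpose_of_trivial, Matrix.transpose_mul,
        Matrix.transpose_mul, Matrix.transpose_transpose, hAt, Matrix.mul_assoc]
    · intro x hx
      have hy : (R j)ᵀ *ᵥ x ≠ 0 := by
        intro h
        apply hx
        apply hinj
        simpa using h
      have h0 := hA.dotProduct_mulVec_pos hy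
      simp only [star_trivial] at h0 ⊢
      rw [← Matrix.mulVec_mulVec, ← Matrix.mulVec_mulVec, Matrix.dotProduct_mulVec,
        ← Matrix.mulVec_transpose]
      exact h0
  -- invertibility of Aⱼ
  have hdet : ∀ j, IsUnit (R j * A * (R j)ᵀ).det := fun j =>
    Matrix.isUnit_iff_isUnit_det _ |>.mp (hAj j).isUnit
  intro u
  obtain ⟨uloc, hu, hbound⟩ := hdecomp u
  set w : Fin n → ℝ := A *ᵥ u with hw
  set Aj : ∀ j, Matrix (Fin (nj j)) (Fin (nj j)) ℝ := fun j => R j * A * (R j)ᵀ with hAjdef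
  set v : ∀ j, Fin (nj j) → ℝ := fun j => (Aj j)⁻¹ *ᵥ (R j *ᵥ w) with hv
  -- Aⱼ vⱼ = Rⱼ w
  have hAv : ∀ j, Aj j *ᵥ v j = R j *ᵥ w := by
    intro j
    rw [hv]
    rw [Matrix.mulVec_mulVec, Matrix.mul_nonsing_inv _ (hdet j), Matrix.one_mulVec]
  -- symmetry of Aⱼ
  have hAjt : ∀ j, (Aj j)ᵀ = Aj j := by
    intro j
    rw [← Matrix.conjTranspose_eq_transpose_of_trivial]; exact (hAj j).isHermitian
  -- moving Aⱼ across the dot product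
  have hsym : ∀ j (x y : Fin (nj j) → ℝ), x ⬝ᵥ (Aj j *ᵥ y) = (Aj j *ᵥ x) ⬝ᵥ y := by
    intro j x y
    rw [Matrix.dotProduct_mulVec, ← Matrix.mulVec_transpose, hAjt]
  -- Fact B: uᵀAu = Σ ulocⱼ ⬝ (Rⱼ w)
  have hP : u ⬝ᵥ (A *ᵥ u) = ∑ j, uloc j ⬝ᵥ (R j *ᵥ w) := by
    rw [← hw]
    conv_lhs => rw [hu]
    rw [sum_dp]
    refine Finset.sum_congr rfl fun j _ => ?_
    rw [Matrix.mulVec_transpose, ← Matrix.dotProduct_mulVec]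
  -- Fact C: uᵀ A M⁻¹ A u = Σ (Rⱼ w) ⬝ vⱼ
  have hS : u ⬝ᵥ ((A * Minv * A) *ᵥ u) = ∑ j, (R j *ᵥ w) ⬝ᵥ v j := by
    have h1 : (A * Minv * A) *ᵥ u = A *ᵥ (Minv *ᵥ w) := by
      rw [hw, ← Matrix.mulVec_mulVec, ← Matrix.mulVec_mulVec]
    rw [h1, Matrix.dotProduct_mulVec, ← Matrix.mulVec_transpose, hAt, ← hw, hM,
      sum_mv, dp_sum]
    refine Finset.sum_congr rfl fun j _ => ?_
    rw [← Matrix.mulVec_mulVec, ← Matrix.mulVec_mulVec, Matrix.dotProduct_mulVec,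
      ← Matrix.mulVec_transpose, Matrix.transpose_transpose]
  -- Fact D: nonnegativity of the Aⱼ-norm of ulocⱼ - C₀ vⱼ
  have hD : ∀ j, 0 ≤ (uloc j - C₀ • v j) ⬝ᵥ (Aj j *ᵥ (uloc j - C₀ • v j)) := by
    intro j
    have := (hAj j).posSemidef.dotProduct_mulVec_nonneg (uloc j - C₀ • v j)
    simpa using this
  -- expand each term of Fact D
  have hkey : ∀ j, (uloc j - C₀ • v j) ⬝ᵥ (Aj j *ᵥ (uloc j - C₀ • v j)) =
      uloc j ⬝ᵥ (Aj j *ᵥ uloc j) - 2 * C₀ * (uloc j ⬝ᵥ (R j *ᵥ w))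
        + C₀ ^ 2 * ((R j *ᵥ w) ⬝ᵥ v j) := by
    intro j
    have e1 : uloc j ⬝ᵥ (Aj j *ᵥ v j) = uloc j ⬝ᵥ (R j *ᵥ w) := by rw [hAv]
    have e2 : v j ⬝ᵥ (Aj j *ᵥ uloc j) = uloc j ⬝ᵥ (R j *ᵥ w) := by
      rw [hsym, hAv, dotProduct_comm]
    have e3 : v j ⬝ᵥ (Aj j *ᵥ v j) = (R j *ᵥ w) ⬝ᵥ v j := by
      rw [hsym, hAv]
    rw [Matrix.mulVec_sub, sub_dotProduct, dotProduct_sub,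
      dotProduct_sub, Matrix.mulVec_smul, smul_dotProduct,
      smul_dotProduct, dotProduct_smul, dotProduct_smul,
      smul_eq_mul, smul_eq_mul, smul_eq_mul, smul_eq_mul, e1, e2, e3]
    ring
  -- combine
  have hsum : 0 ≤ (∑ j, uloc j ⬝ᵥ (Aj j *ᵥ uloc j))
      - 2 * C₀ * (u ⬝ᵥ (A *ᵥ u)) + C₀ ^ 2 * (u ⬝ᵥ ((A * Minv * A) *ᵥ u)) := by
    have h0 : 0 ≤ ∑ j, (uloc j - C₀ • v j) ⬝ᵥ (Aj j *ᵥ (uloc j - C₀ • v j)) :=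
      Finset.sum_nonneg fun j _ => hD j
    calc (0:ℝ) ≤ ∑ j, (uloc j - C₀ • v j) ⬝ᵥ (Aj j *ᵥ (uloc j - C₀ • v j)) := h0
    _ = ∑ j, (uloc j ⬝ᵥ (Aj j *ᵥ uloc j) - 2 * C₀ * (uloc j ⬝ᵥ (R j *ᵥ w))
        + C₀ ^ 2 * ((R j *ᵥ w) ⬝ᵥ v j)) := Finset.sum_congr rfl fun j _ => hkey j
    _ = (∑ j, uloc j ⬝ᵥ (Aj j *ᵥ uloc j))
        - 2 * C₀ * (u ⬝ᵥ (A *ᵥ u)) + C₀ ^ 2 * (u ⬝ᵥ ((A * Minv * A) *ᵥ u)) := by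
        rw [Finset.sum_add_distrib, Finset.sum_sub_distrib, hP, hS,
          Finset.mul_sum, Finset.mul_sum]
  have hb : ∑ j, uloc j ⬝ᵥ (Aj j *ᵥ uloc j) ≤ C₀ * (u ⬝ᵥ (A *ᵥ u)) := hbound
  nlinarith [hsum, hb, hC₀]
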